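/- Let u be a symplectic transformation of E with minimal polynomial q^m, regard E as an R-module via ρ·x = g(u)(x) for ρ the class of g ∈ K[X], and let l : R → K be a K-linear map which is nondegenerate (l(λρ) = 0 for all ρ implies λ = 0) and satisfies l(σ(ρ)) = ε·l(ρ) for all ρ, where ε = -1 if deg q ≥ 2 and ε = (-1)^{m+1} if deg q = 1. Then there exists a map f : E × E → R such that: f is additive in each variable; f(ρ·x, y) = ρ·f(x, y) for all ρ ∈ R; f(x, y) = -ε·σ(f(y, x)) for all x, y; l(ρ·f(x, y)) = ⟨ρ·x, y⟩ for all ρ ∈ R and x, y ∈ E; and f is nondegenerate (f(x, y) = 0 for all y implies x = 0). -/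

import Mathlib

open Polynomial

set_option maxHeartbeats 2000000 in
/-- For a symplectic `u` with minimal polynomial `q^m` (`q` monic irreducible,
`reverse q = c • q`), regarding `E` as a module over `R = K[X]/(q^m)` via
`(mk g) • x = g(u) x`, and given a nondegenerate `K`-linear form `l : R → K` with
`l (σ ρ) = ε * l ρ`, there is a nondegenerate sesquilinear form `f : E × E → R` with
`f (ρ • x) y = ρ * f x y`, `f x y = -ε • σ (f y x)` and `l (ρ * f x y) = ⟨ρ • x, y⟩`. -/
theorem stmt_13 {K E : Type*} [Field K] (hchar : (2 : K) ≠ 0)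
    [AddCommGroup E] [Module K E] [FiniteDimensional K E]
    (B : E →ₗ[K] E →ₗ[K] K) (halt : ∀ x, B x x = 0)
    (hnd : ∀ x, (∀ y, B x y = 0) → x = 0)
    (q : K[X]) (hq : q.Monic) (hirr : Irreducible q)
    (c : K) (hrev : q.reverse = c • q) (m : ℕ) (hm : 1 ≤ m)
    (u : E ≃ₗ[K] E) (hu : ∀ x y, B (u x) (u y) = B x y)
    (hmin : minpoly K (u : Module.End K E) = q ^ m)
    (σ : (K[X] ⧸ Ideal.span {q ^ m}) ≃ₐ[K] (K[X] ⧸ Ideal.span {q ^ m}))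
    (hσ : σ (Ideal.Quotient.mk (Ideal.span {q ^ m}) X)
        * Ideal.Quotient.mk (Ideal.span {q ^ m}) X = 1)
    (ε : K) (hε : (2 ≤ q.natDegree ∧ ε = -1) ∨ (q.natDegree = 1 ∧ ε = (-1) ^ (m + 1)))
    (l : (K[X] ⧸ Ideal.span {q ^ m}) →ₗ[K] K)
    (hlnd : ∀ lam, (∀ ρ, l (lam * ρ) = 0) → lam = 0)
    (hlσ : ∀ ρ, l (σ ρ) = ε * l ρ) :
    ∃ f : E → E → (K[X] ⧸ Ideal.span {q ^ m}),
      (∀ x₁ x₂ y, f (x₁ + x₂) y = f x₁ y + f x₂ y) ∧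
      (∀ x y₁ y₂, f x (y₁ + y₂) = f x y₁ + f x y₂) ∧
      (∀ (g : K[X]) (x y : E), f (aeval (u : Module.End K E) g x) y
          = Ideal.Quotient.mk (Ideal.span {q ^ m}) g * f x y) ∧
      (∀ x y, f x y = (-ε) • σ (f y x)) ∧
      (∀ (g : K[X]) (x y : E), l (Ideal.Quotient.mk (Ideal.span {q ^ m}) g * f x y)
          = B (aeval (u : Module.End K E) g x) y) ∧
      (∀ x, (∀ y, f x y = 0) → x = 0) := by
  classical
  have hqm0 : q ^ m ≠ 0 := pow_ne_zero m hq.ne_zero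
  haveI : FiniteDimensional K (K[X] ⧸ Ideal.span {q ^ m}) :=
    Module.Finite.of_basis (AdjoinRoot.powerBasis hqm0).basis
  have hε2 : ε * ε = 1 := by
    rcases hε with ⟨_, rfl⟩ | ⟨_, rfl⟩
    · ring
    · rw [← pow_add, ← two_mul, pow_mul]; norm_num
  -- antisymmetry of B
  have hBanti : ∀ x y, B x y = - B y x := by
    intro x y
    have h := halt (x + y)
    simp only [map_add, LinearMap.add_apply, halt] at h
    linear_combination h
  -- action of R on E
  have hkill : ∀ a ∈ Ideal.span {q ^ m}, aeval (u : Module.End K E) a = 0 := by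
    intro a ha
    rw [Ideal.mem_span_singleton] at ha
    obtain ⟨b, rfl⟩ := ha
    rw [map_mul, ← hmin, minpoly.aeval, zero_mul]
  set A : (K[X] ⧸ Ideal.span {q ^ m}) →ₐ[K] Module.End K E :=
    Ideal.Quotient.liftₐ (Ideal.span {q ^ m}) (aeval (u : Module.End K E)) hkill with hA
  have hAmk : ∀ g : K[X], A (Ideal.Quotient.mk (Ideal.span {q ^ m}) g)
      = aeval (u : Module.End K E) g := by
    intro g
    rw [hA, Ideal.Quotient.liftₐ_apply]
    rfl
  have hAX : A (Ideal.Quotient.mk (Ideal.span {q ^ m}) X) = (u : Module.End K E) := by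
    rw [hAmk]; simp
  have hAXinv : A (σ (Ideal.Quotient.mk (Ideal.span {q ^ m}) X))
      = (u.symm : Module.End K E) := by
    have h1 : A (σ (Ideal.Quotient.mk (Ideal.span {q ^ m}) X))
        * A (Ideal.Quotient.mk (Ideal.span {q ^ m}) X) = 1 := by
      rw [← map_mul, hσ, map_one]
    ext z
    have := congrArg (fun (w : Module.End K E) => w (u.symm z)) h1
    simp only [Module.End.mul_apply, Module.End.one_apply, hAX] at this
    simpa [LinearEquiv.coe_coe] using this
  -- σ involutive
  have hσσ : ∀ ρ, σ (σ ρ) = ρ := by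
    have key : (σ.toAlgHom.comp σ.toAlgHom).comp (Ideal.Quotient.mkₐ K (Ideal.span {q ^ m}))
        = Ideal.Quotient.mkₐ K (Ideal.span {q ^ m}) := by
      apply Polynomial.algHom_ext
      simp only [AlgHom.coe_comp, Function.comp_apply, AlgEquiv.coe_algHom,
        Ideal.Quotient.mkₐ_eq_mk]
      have h2 : σ (σ (Ideal.Quotient.mk (Ideal.span {q ^ m}) X))
          * σ (Ideal.Quotient.mk (Ideal.span {q ^ m}) X) = 1 := by
        rw [← map_mul, hσ, map_one]
      calc σ (σ (Ideal.Quotient.mk (Ideal.span {q ^ m}) X))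
          = σ (σ (Ideal.Quotient.mk (Ideal.span {q ^ m}) X))
            * (σ (Ideal.Quotient.mk (Ideal.span {q ^ m}) X)
              * Ideal.Quotient.mk (Ideal.span {q ^ m}) X) := by rw [hσ, mul_one]
        _ = (σ (σ (Ideal.Quotient.mk (Ideal.span {q ^ m}) X))
            * σ (Ideal.Quotient.mk (Ideal.span {q ^ m}) X))
            * Ideal.Quotient.mk (Ideal.span {q ^ m}) X := by ring
        _ = Ideal.Quotient.mk (Ideal.span {q ^ m}) X := by rw [h2, one_mul]
    intro ρ
    obtain ⟨g, rfl⟩ := Ideal.Quotient.mk_surjective ρ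
    exact congrArg (fun φ : K[X] →ₐ[K] (K[X] ⧸ Ideal.span {q ^ m}) => φ g) key
  -- adjunction for powers
  have hpow : ∀ (n : ℕ) (x y : E), B (((u : Module.End K E)^n) x) y
      = B x (((u.symm : Module.End K E)^n) y) := by
    intro n
    induction n with
    | zero => intro x y; simp
    | succ n ih =>
      intro x y
      have h1 : ((u : Module.End K E)^(n+1)) x = ((u : Module.End K E)^n) (u x) := by
        rw [pow_succ]; rfl
      have h2 : ((u.symm : Module.End K E)^(n+1)) y
          = ((u.symm : Module.End K E)^n) (u.symm y) := by
        rw [pow_succ]; rfl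
      have hbase : ∀ a b, B (u a) b = B a (u.symm b) := by
        intro a b
        have := hu a (u.symm b)
        rwa [u.apply_symm_apply] at this
      rw [h1, h2, ih (u x) y, hbase]
      congr 1
      calc u.symm (((u.symm : Module.End K E)^n) y)
          = ((u.symm : Module.End K E) * (u.symm : Module.End K E)^n) y := rfl
        _ = ((u.symm : Module.End K E)^n * (u.symm : Module.End K E)) y := by
            rw [← pow_succ, ← pow_succ']
        _ = ((u.symm : Module.End K E)^n) (u.symm y) := rfl
  -- adjunction in general
  have hadj : ∀ (g : K[X]) (x y : E), B (aeval (u : Module.End K E) g x) y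
      = B x (aeval (u.symm : Module.End K E) g y) := by
    intro g x y
    induction g using Polynomial.induction_on' with
    | add p r hp hr => simp only [map_add, LinearMap.add_apply, hp, hr]
    | monomial n a =>
      simp only [aeval_monomial, Module.End.mul_apply, Module.algebraMap_end_apply,
        LinearMap.smul_apply, map_smul, smul_eq_mul]
      exact congrArg (a * ·) (hpow n x y)
  -- adjunction at the level of R
  have key2 : (A.comp σ.toAlgHom).comp (Ideal.Quotient.mkₐ K (Ideal.span {q ^ m}))
      = aeval (u.symm : Module.End K E) := by
    apply Polynomial.algHom_ext
    simpa using hAXinv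
  have hadjR : ∀ (ρ : K[X] ⧸ Ideal.span {q ^ m}) (x y : E),
      B (A ρ x) y = B x (A (σ ρ) y) := by
    intro ρ x y
    obtain ⟨g, rfl⟩ := Ideal.Quotient.mk_surjective ρ
    have h1 : A (σ (Ideal.Quotient.mk (Ideal.span {q ^ m}) g))
        = aeval (u.symm : Module.End K E) g :=
      congrArg (fun φ : K[X] →ₐ[K] Module.End K E => φ g) key2
    rw [hAmk, h1]
    exact hadj g x y
  -- the pairing T
  obtain ⟨T, hT⟩ : ∃ T : (K[X] ⧸ Ideal.span {q ^ m}) →ₗ[K]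
        Module.Dual K (K[X] ⧸ Ideal.span {q ^ m}),
      T = (LinearMap.mul K (K[X] ⧸ Ideal.span {q ^ m})).compr₂ l := ⟨_, rfl⟩
  have hTapp : ∀ lam ρ, T lam ρ = l (lam * ρ) := fun lam ρ => by rw [hT]; rfl
  have hTinj : Function.Injective T := by
    rw [← LinearMap.ker_eq_bot, LinearMap.ker_eq_bot']
    intro lam hlam
    refine hlnd lam fun ρ => ?_
    rw [← hTapp, hlam]; rfl
  have hTdim : Module.finrank K (K[X] ⧸ Ideal.span {q ^ m})
      = Module.finrank K (Module.Dual K (K[X] ⧸ Ideal.span {q ^ m})) :=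
    (Subspace.dual_finrank_eq).symm
  have hTsurj : Function.Surjective T :=
    (LinearMap.injective_iff_surjective_of_finrank_eq_finrank hTdim).mp hTinj
  -- uniqueness
  have huniq : ∀ r s : K[X] ⧸ Ideal.span {q ^ m},
      (∀ ρ, l (r * ρ) = l (s * ρ)) → r = s := by
    intro r s h
    have : r - s = 0 := by
      refine hlnd (r - s) fun ρ => ?_
      rw [sub_mul, map_sub, h, sub_self]
    exact sub_eq_zero.mp this
  -- existence of f x y
  have key : ∀ x y : E, ∃ r : K[X] ⧸ Ideal.span {q ^ m},
      ∀ ρ, l (r * ρ) = B (A ρ x) y := by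
    intro x y
    obtain ⟨w, hw⟩ : ∃ w : Module.Dual K (K[X] ⧸ Ideal.span {q ^ m}),
        ∀ ρ, w ρ = B (A ρ x) y := by
      refine ⟨{ toFun := fun ρ => B (A ρ x) y
                map_add' := by intro a b; simp [map_add, LinearMap.add_apply]
                map_smul' := by intro a b; simp [map_smul] }, fun ρ => rfl⟩
    obtain ⟨r, hr⟩ := hTsurj w
    exact ⟨r, fun ρ => by rw [← hTapp, hr, hw]⟩
  choose f hf using key
  have hmul : ∀ (ρ' ρ : K[X] ⧸ Ideal.span {q ^ m}) (x : E),
      A ρ (A ρ' x) = A (ρ' * ρ) x := by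
    intro ρ' ρ x
    rw [mul_comm ρ' ρ, map_mul]
    rfl
  refine ⟨f, ?_, ?_, ?_, ?_, ?_, ?_⟩
  · intro x₁ x₂ y
    refine huniq _ _ fun ρ => ?_
    rw [hf (x₁ + x₂) y ρ, map_add, map_add, LinearMap.add_apply, ← hf x₁ y ρ, ← hf x₂ y ρ,
      add_mul, map_add]
  · intro x y₁ y₂
    refine huniq _ _ fun ρ => ?_
    rw [hf x (y₁ + y₂) ρ, map_add, ← hf x y₁ ρ, ← hf x y₂ ρ, add_mul, map_add]
  · -- f (aeval g x) y = mk g * f x y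
    intro g x y
    refine huniq _ _ fun ρ => ?_
    rw [hf (aeval (u : Module.End K E) g x) y ρ]
    have h1 : Ideal.Quotient.mk (Ideal.span {q ^ m}) g * f x y * ρ
        = f x y * (Ideal.Quotient.mk (Ideal.span {q ^ m}) g * ρ) := by ring
    rw [h1, hf x y, ← hmul, hAmk]
  · -- symmetry
    intro x y
    refine huniq _ _ fun ρ => ?_
    rw [hf x y ρ]
    calc B (A ρ x) y = B x (A (σ ρ) y) := hadjR ρ x y
      _ = - B (A (σ ρ) y) x := hBanti _ _
      _ = - l (f y x * σ ρ) := by rw [hf y x (σ ρ)]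
      _ = - (ε * ε) * l (f y x * σ ρ) := by rw [hε2]; ring
      _ = -ε * l (σ (f y x * σ ρ)) := by rw [hlσ]; ring
      _ = -ε * l (σ (f y x) * ρ) := by
          rw [map_mul, hσσ ρ]
      _ = l (((-ε) • σ (f y x)) * ρ) := by
          rw [smul_mul_assoc, map_smul, smul_eq_mul]
  · -- l (mk g * f x y) = B (aeval g x) y
    intro g x y
    rw [mul_comm, hf x y, hAmk]
  · -- nondegenerate
    intro x hx
    refine hnd x fun y => ?_
    have := hf x y 1
    rw [hx y, zero_mul, map_zero, map_one, Module.End.one_apply] at this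
    exact this.symm
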